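/- Let λ₁,...,λₙ > 0 and λ ≥ (1/n)∑_{i=1}^n λᵢ. Then for every u ∈ (0,1), ∑_{i=1}^n λᵢ/(1-(1-λᵢ)u) ≤ nλ/(1-(1-λ)u). (Hence for parallel PO systems X_{n:n} ≤_{rhr} Y_{n:n}, comparing the heterogeneous system with the homogeneous one.) -/

import Mathlib

open Finset

theorem parallel_po_rhr_homog_arithmetic_mean {n : ℕ} (lam : Fin n → ℝ) (l : ℝ)
    (hlam : ∀ i, 0 < lam i)
    (hl : l ≥ (1 / n) * ∑ i, lam i) :
    ∀ u : ℝ, u ∈ Set.Ioo (0:ℝ) 1 →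
      ∑ i, lam i / (1 - (1 - lam i) * u) ≤ n * l / (1 - (1 - l) * u) := by
  intro u hu
  obtain ⟨hu0, hu1⟩ := hu
  rcases Nat.eq_zero_or_pos n with hn | hn
  · subst hn
    simp
  have hn0 : (0:ℝ) < n := by exact_mod_cast hn
  set S := ∑ i, lam i with hS
  have hSpos : 0 < S := Finset.sum_pos (fun i _ => hlam i)
    (Finset.univ_nonempty_iff.mpr (Fin.pos_iff_nonempty.mp hn))
  set m := S / n with hm
  have hmpos : 0 < m := div_pos hSpos hn0
  have hml : m ≤ l := by
    have h1 : (1/(n:ℝ)) * S = m := by rw [hm]; ring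
    linarith [hl, h1.symm ▸ hl]
  have hl0 : 0 < l := lt_of_lt_of_le hmpos hml
  have hDm : 0 < 1 - (1 - m) * u := by nlinarith
  have hDl : 0 < 1 - (1 - l) * u := by nlinarith
  have hnm : (n:ℝ) * m = S := by rw [hm]; field_simp
  have key : ∀ i, lam i / (1 - (1 - lam i) * u) ≤
      m / (1 - (1 - m) * u) + (1 - u) * (lam i - m) / (1 - (1 - m) * u) ^ 2 := by
    intro i
    have ht := hlam i
    have hDt : 0 < 1 - (1 - lam i) * u := by nlinarith
    have hid : m / (1 - (1 - m) * u) + (1 - u) * (lam i - m) / (1 - (1 - m) * u) ^ 2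
        - lam i / (1 - (1 - lam i) * u)
        = (1 - u) * u * (lam i - m) ^ 2 / ((1 - (1 - lam i) * u) * (1 - (1 - m) * u) ^ 2) := by
      have h1 := hDm.ne'
      have h2 := pow_ne_zero 2 h1
      have h3 := hDt.ne'
      rw [div_add_div _ _ h1 h2, div_sub_div _ _ (mul_ne_zero h1 h2) h3,
        div_eq_div_iff (mul_ne_zero (mul_ne_zero h1 h2) h3) (mul_ne_zero h3 h2)]
      ring
    have hpos : 0 ≤ (1 - u) * u * (lam i - m) ^ 2 / ((1 - (1 - lam i) * u) * (1 - (1 - m) * u) ^ 2) := by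
      apply div_nonneg
      · have h1u : (0:ℝ) ≤ 1 - u := by linarith
        positivity
      · positivity
    linarith [hid ▸ hpos]
  calc ∑ i, lam i / (1 - (1 - lam i) * u)
      ≤ ∑ i : Fin n, (m / (1 - (1 - m) * u) + (1 - u) * (lam i - m) / (1 - (1 - m) * u) ^ 2) :=
        Finset.sum_le_sum fun i _ => key i
    _ = n * m / (1 - (1 - m) * u) := by
        rw [Finset.sum_add_distrib, Finset.sum_const, Finset.card_univ, Fintype.card_fin]
        have hz : ∑ i : Fin n, (1 - u) * (lam i - m) / (1 - (1 - m) * u) ^ 2 = 0 := by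
          rw [← Finset.sum_div]
          have : ∑ i : Fin n, (1 - u) * (lam i - m) = (1 - u) * (S - n * m) := by
            rw [← Finset.mul_sum, Finset.sum_sub_distrib, Finset.sum_const, Finset.card_univ,
              Fintype.card_fin, nsmul_eq_mul, hS]
          rw [this, hnm]
          simp
        rw [hz, nsmul_eq_mul, add_zero, mul_div_assoc]
    _ ≤ n * l / (1 - (1 - l) * u) := by
        rw [div_le_div_iff₀ hDm hDl]
        nlinarith [mul_nonneg (mul_nonneg hn0.le (sub_nonneg.mpr hml)) (sub_nonneg.mpr hu1.le)]
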